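/- Let r = √2/3 and μ(x) = 2x/(1 + x²/r²). Then μ maps the open disc D_r = {x ∈ ℂ : |x| < r} bijectively onto V = ℂ \ {μ ∈ ℂ : μ² ∈ [r², ∞)}. -/

import Mathlib

set_option maxHeartbeats 1000000

open Complex Metric

theorem stmt_4 (r : ℝ) (hr : r = Real.sqrt 2 / 3) :
    Set.BijOn (fun x : ℂ => 2 * x / (1 + x ^ 2 / (r : ℂ) ^ 2))
      (ball (0 : ℂ) r)
      {μ : ℂ | ¬ ∃ t : ℝ, r ^ 2 ≤ t ∧ μ ^ 2 = (t : ℂ)} := by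
  have hr0 : 0 < r := by rw [hr]; positivity
  have hrC : (r : ℂ) ≠ 0 := by exact_mod_cast hr0.ne'
  have hball : ∀ x : ℂ, x ∈ ball (0:ℂ) r ↔ ‖x‖ < r := by
    intro x; simp [mem_ball, Complex.dist_eq]
  have hden : ∀ x : ℂ, ‖x‖ < r → x ^ 2 + (r:ℂ) ^ 2 ≠ 0 := by
    intro x hx h
    have h2 : x ^ 2 = -(r:ℂ) ^ 2 := by linear_combination h
    have h3 : ‖x ^ 2‖ = r ^ 2 := by
      rw [h2]; simp [abs_of_pos hr0]
    rw [norm_pow] at h3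
    nlinarith [norm_nonneg x]
  have hkey : ∀ x μ : ℂ, x ^ 2 + (r:ℂ) ^ 2 ≠ 0 →
      (2 * x / (1 + x ^ 2 / (r:ℂ) ^ 2) = μ ↔ μ * (x ^ 2 + (r:ℂ) ^ 2) = 2 * (r:ℂ) ^ 2 * x) := by
    intro x μ hne
    have h1 : 1 + x ^ 2 / (r:ℂ) ^ 2 = (x ^ 2 + (r:ℂ) ^ 2) / (r:ℂ) ^ 2 := by
      field_simp; ring
    rw [h1]
    rw [div_div_eq_mul_div, div_eq_iff hne, eq_comm]
    constructor <;> intro h <;> linear_combination h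
  refine ⟨?_, ?_, ?_⟩
  · -- MapsTo
    intro x hx
    rw [hball] at hx
    simp only [Set.mem_setOf_eq]
    rintro ⟨t, ht, hμt⟩
    set μ := 2 * x / (1 + x ^ 2 / (r:ℂ) ^ 2) with hμdef
    have hne := hden x hx
    have hμ : μ * (x ^ 2 + (r:ℂ) ^ 2) = 2 * (r:ℂ) ^ 2 * x := (hkey x μ hne).mp rfl
    have htr : (0:ℝ) < t := lt_of_lt_of_le (by positivity) ht
    have h1 : μ.re * μ.im + μ.im * μ.re = 0 := by
      have h := congrArg Complex.im hμt
      simpa [pow_two, Complex.mul_im] using h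
    have h2 : μ.re * μ.re - μ.im * μ.im = t := by
      have h := congrArg Complex.re hμt
      simpa [pow_two, Complex.mul_re] using h
    have him0 : μ.im = 0 := by
      by_contra him
      have hre0 : μ.re = 0 := by
        rcases mul_eq_zero.mp (by linarith : 2 * (μ.re * μ.im) = 0) with h | h
        · linarith
        · exact (mul_eq_zero.mp h).resolve_right him
      nlinarith [sq_nonneg μ.im]
    set s := μ.re with hsdef
    have hμs : μ = (s : ℂ) := Complex.ext (by simp [hsdef]) (by simp [him0])
    have hs2 : s ^ 2 = t := by nlinarith [h2]
    have hs0 : s ≠ 0 := by intro h; rw [h] at hs2; nlinarith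
    rw [hμs] at hμ
    have hconj : (s:ℂ) * ((starRingEnd ℂ) x ^ 2 + (r:ℂ) ^ 2)
        = 2 * (r:ℂ) ^ 2 * (starRingEnd ℂ) x := by
      have h := congrArg (starRingEnd ℂ) hμ
      simpa [map_mul, map_add, map_pow, map_ofNat, Complex.conj_ofReal] using h
    by_cases him : x.im = 0
    · -- x real
      have hx2 : x = (x.re : ℂ) := Complex.ext (by simp) (by simp [him])
      set a := x.re
      have hre : s * (a ^ 2 + r ^ 2) = 2 * r ^ 2 * a := by
        have h := hμ
        rw [hx2] at h
        exact_mod_cast h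
      have ha2 : a ^ 2 < r ^ 2 := by
        have : |a| < r := by
          have := hx; rw [hx2] at this; simpa [Complex.norm_real] using this
        nlinarith [abs_nonneg a, _root_.sq_abs a]
      have hsr : r ^ 2 ≤ s ^ 2 := by rw [hs2]; exact ht
      have hsq : (s * (a ^ 2 + r ^ 2)) ^ 2 = (2 * r ^ 2 * a) ^ 2 := by rw [hre]
      have hne2 : 0 < (a ^ 2 - r ^ 2) ^ 2 := by nlinarith
      nlinarith [hsq, hsr, sq_nonneg (a ^ 2 + r ^ 2),
        mul_pos (mul_pos hr0 hr0) hne2]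
    · -- x not real
      have hd : x - (starRingEnd ℂ) x ≠ 0 := by
        intro h
        exact him (Complex.conj_eq_iff_im.mp (sub_eq_zero.mp h).symm)
      have h3 : ((s:ℂ) * (x + (starRingEnd ℂ) x) - 2 * (r:ℂ) ^ 2) * (x - (starRingEnd ℂ) x) = 0 := by
        linear_combination hμ - hconj
      have h4 : (s:ℂ) * (x + (starRingEnd ℂ) x) = 2 * (r:ℂ) ^ 2 := by
        have := (mul_eq_zero.mp h3).resolve_right hd
        linear_combination this
      have hsC : (s:ℂ) ≠ 0 := by exact_mod_cast hs0
      have h5 : (s:ℂ) * ((r:ℂ) ^ 2 - x * (starRingEnd ℂ) x) = 0 := by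
        linear_combination hμ - x * h4
      have h6 : x * (starRingEnd ℂ) x = (r:ℂ) ^ 2 := by
        have := (mul_eq_zero.mp h5).resolve_left hsC
        linear_combination -this
      rw [Complex.mul_conj] at h6
      have h7 : Complex.normSq x = r ^ 2 := by exact_mod_cast h6
      rw [← Complex.sq_norm] at h7
      nlinarith [norm_nonneg x]
  · -- InjOn
    intro x hx y hy hxy
    rw [hball] at hx hy
    simp only at hxy
    set μ := 2 * x / (1 + x ^ 2 / (r:ℂ) ^ 2) with hμdef
    have hnex := hden x hx
    have hney := hden y hy
    have hμx : μ * (x ^ 2 + (r:ℂ) ^ 2) = 2 * (r:ℂ) ^ 2 * x := (hkey x μ hnex).mp rfl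
    have hμy : μ * (y ^ 2 + (r:ℂ) ^ 2) = 2 * (r:ℂ) ^ 2 * y := (hkey y μ hney).mp hxy.symm
    by_contra hne
    have hd : x - y ≠ 0 := sub_ne_zero.mpr hne
    have h3 : (μ * (x + y) - 2 * (r:ℂ) ^ 2) * (x - y) = 0 := by
      linear_combination hμx - hμy
    have h4 : μ * (x + y) = 2 * (r:ℂ) ^ 2 := by
      have := (mul_eq_zero.mp h3).resolve_right hd
      linear_combination this
    have hμ0 : μ ≠ 0 := by
      intro h
      rw [h] at h4
      simp at h4
      exact hr0.ne' h4
    have h5 : μ * ((r:ℂ) ^ 2 - x * y) = 0 := by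
      linear_combination hμx - x * h4
    have h6 : x * y = (r:ℂ) ^ 2 := by
      have := (mul_eq_zero.mp h5).resolve_left hμ0
      linear_combination -this
    have h7 : ‖x * y‖ = r ^ 2 := by
      rw [h6]; simp [abs_of_pos hr0]
    rw [norm_mul] at h7
    nlinarith [norm_nonneg x, norm_nonneg y, hx, hy]
  · -- SurjOn
    intro μ hμS
    simp only [Set.mem_setOf_eq] at hμS
    by_cases hμ0 : μ = 0
    · refine ⟨0, ?_, ?_⟩
      · rw [hball]; simpa using hr0
      · simp [hμ0]
    obtain ⟨w, hw⟩ := IsAlgClosed.exists_pow_nat_eq (1 - μ ^ 2 / (r:ℂ) ^ 2) (n := 2) (by norm_num)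
    have hw0 : w ≠ 0 := by
      intro h
      rw [h] at hw
      apply hμS
      refine ⟨r ^ 2, le_refl _, ?_⟩
      push_cast
      have h2 : μ ^ 2 / (r:ℂ) ^ 2 = 1 := by linear_combination hw
      rw [div_eq_one_iff_eq (pow_ne_zero 2 hrC)] at h2
      exact h2
    obtain ⟨x₁, hx₁⟩ : ∃ x₁ : ℂ, x₁ = (r:ℂ) ^ 2 * (1 + w) / μ := ⟨_, rfl⟩
    obtain ⟨x₂, hx₂⟩ : ∃ x₂ : ℂ, x₂ = (r:ℂ) ^ 2 * (1 - w) / μ := ⟨_, rfl⟩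
    have hw' : (r:ℂ) ^ 2 * w ^ 2 = (r:ℂ) ^ 2 - μ ^ 2 := by
      field_simp at hw
      linear_combination hw
    have hq1 : μ * (x₁ ^ 2 + (r:ℂ) ^ 2) = 2 * (r:ℂ) ^ 2 * x₁ := by
      rw [hx₁]
      field_simp
      linear_combination hw'
    have hq2 : μ * (x₂ ^ 2 + (r:ℂ) ^ 2) = 2 * (r:ℂ) ^ 2 * x₂ := by
      rw [hx₂]
      field_simp
      linear_combination hw'
    have hprod : x₁ * x₂ = (r:ℂ) ^ 2 := by
      rw [hx₁, hx₂]
      field_simp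
      linear_combination (-1 : ℂ) * hw'
    have hgood : ∀ x : ℂ, ‖x‖ < r → μ * (x ^ 2 + (r:ℂ) ^ 2) = 2 * (r:ℂ) ^ 2 * x →
        ∃ y ∈ ball (0:ℂ) r, 2 * y / (1 + y ^ 2 / (r:ℂ) ^ 2) = μ := by
      intro x hx hq
      exact ⟨x, (hball x).mpr hx, (hkey x μ (hden x hx)).mpr hq⟩
    by_cases h1 : ‖x₁‖ < r
    · exact hgood x₁ h1 hq1
    by_cases h2 : ‖x₂‖ < r
    · exact hgood x₂ h2 hq2
    exfalso
    push_neg at h1 h2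
    have habs : ‖x₁‖ * ‖x₂‖ = r ^ 2 := by
      rw [← norm_mul, hprod]; simp [abs_of_pos hr0]
    have he1 : ‖x₁‖ = r := by
      refine le_antisymm ?_ h1
      have h' : ‖x₁‖ * r ≤ ‖x₁‖ * ‖x₂‖ :=
        mul_le_mul_of_nonneg_left h2 (norm_nonneg _)
      rw [habs] at h'
      nlinarith
    have he2 : ‖x₂‖ = r := by
      refine le_antisymm ?_ h2
      have h' : ‖x₂‖ * r ≤ ‖x₂‖ * ‖x₁‖ :=
        mul_le_mul_of_nonneg_left h1 (norm_nonneg _)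
      nlinarith [h', habs, hr0]
    have hx10 : x₁ ≠ 0 := by
      intro h; rw [h] at he1; simp at he1; exact hr0.ne he1
    -- conj x₁ = x₂
    have hc1 : x₁ * (starRingEnd ℂ) x₁ = (r:ℂ) ^ 2 := by
      rw [Complex.mul_conj, ← Complex.sq_norm, he1]
      norm_cast
    have hc2 : (starRingEnd ℂ) x₁ = x₂ := by
      have h := hc1.trans hprod.symm
      exact mul_left_cancel₀ hx10 h
    have hsum : x₁ + x₂ = 2 * (r:ℂ) ^ 2 / μ := by
      rw [hx₁, hx₂, ← add_div,
        show (r:ℂ) ^ 2 * (1 + w) + (r:ℂ) ^ 2 * (1 - w) = 2 * (r:ℂ) ^ 2 by ring]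
    have hre : (2 * (x₁.re : ℂ)) = 2 * (r:ℂ) ^ 2 / μ := by
      rw [← hsum, ← hc2, Complex.add_conj]
      push_cast
      ring
    have hre2 : μ * (x₁.re : ℂ) = (r:ℂ) ^ 2 := by
      rw [eq_div_iff hμ0] at hre
      linear_combination hre / 2
    have hre0 : x₁.re ≠ 0 := by
      intro h
      rw [h] at hre2
      simp at hre2
      exact hrC (by exact_mod_cast (pow_eq_zero_iff (by norm_num)).mp hre2.symm)
    have hμeq : μ = ((r ^ 2 / x₁.re : ℝ) : ℂ) := by
      have hc : ((x₁.re : ℝ) : ℂ) ≠ 0 := by exact_mod_cast hre0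
      rw [Complex.ofReal_div, Complex.ofReal_pow, eq_div_iff hc]
      linear_combination hre2
    apply hμS
    refine ⟨(r ^ 2 / x₁.re) ^ 2, ?_, ?_⟩
    · have hle : |x₁.re| ≤ r := by
        have := Complex.abs_re_le_norm x₁
        rw [he1] at this
        exact this
      have hpos : 0 < x₁.re ^ 2 := by positivity
      have hc2' : x₁.re ^ 2 ≤ r ^ 2 := by
        nlinarith [_root_.sq_abs x₁.re, abs_nonneg x₁.re]
      rw [div_pow, le_div_iff₀ hpos]
      nlinarith [mul_le_mul_of_nonneg_left hc2' (sq_nonneg r)]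
    · rw [hμeq]
      push_cast
      ring
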